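/- Let E ⊆ ℝ^N be a closed set with E ≠ ∅ and E ≠ ℝ^N, and let d_E(x) := dist_{φ°}(x,E) − dist_{φ°}(x, ℝ^N \ E) be the signed distance function induced by φ°. Then d_E is Lipschitz (indeed |d_E(x) − d_E(y)| ≤ φ°(x−y) for all x,y), and at every point x ∉ ∂E at which d_E is differentiable one has φ(∇d_E(x)) = 1; in particular φ(∇d_E) = 1 almost everywhere in ℝ^N \ ∂E. -/

import Mathlib

open MeasureTheory Set Filter Topology
open scoped RealInnerProductSpace ENNReal

noncomputable section

/-- An anisotropy (norm) on `ℝ^N`: convex, even, positively 1-homogeneous and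
positive away from the origin. -/
structure IsAnisoNorm {N : ℕ} (φ : EuclideanSpace ℝ (Fin N) → ℝ) : Prop where
  convexOn : ConvexOn ℝ Set.univ φ
  even : ∀ x, φ (-x) = φ x
  homog : ∀ (c : ℝ) (x : EuclideanSpace ℝ (Fin N)), 0 ≤ c → φ (c • x) = c * φ x
  pos : ∀ x : EuclideanSpace ℝ (Fin N), x ≠ 0 → 0 < φ x

/-- The polar norm `φ°(ξ) = sup {ξ·η : φ(η) ≤ 1}`. -/
noncomputable def polar {N : ℕ} (φ : EuclideanSpace ℝ (Fin N) → ℝ)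
    (ξ : EuclideanSpace ℝ (Fin N)) : ℝ :=
  sSup ((fun η => ⟪ξ, η⟫) '' {η : EuclideanSpace ℝ (Fin N) | φ η ≤ 1})

/-- The subdifferential `∂φ(p) = {v : ∀ q, φ(q) ≥ φ(p) + v·(q-p)}`. -/
def subdiff {N : ℕ} (φ : EuclideanSpace ℝ (Fin N) → ℝ) (p : EuclideanSpace ℝ (Fin N)) :
    Set (EuclideanSpace ℝ (Fin N)) :=
  {v | ∀ q, φ p + ⟪v, q - p⟫ ≤ φ q}


/-- The distance induced by the polar norm from a point to a (nonempty) set. -/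
noncomputable def rdistP {N : ℕ} (φ : EuclideanSpace ℝ (Fin N) → ℝ)
    (x : EuclideanSpace ℝ (Fin N)) (F : Set (EuclideanSpace ℝ (Fin N))) : ℝ :=
  sInf ((fun y => polar φ (x - y)) '' F)

/-- The signed distance function `d_E = dist_{φ°}(·,E) - dist_{φ°}(·,Eᶜ)`. -/
noncomputable def signedDistP {N : ℕ} (φ : EuclideanSpace ℝ (Fin N) → ℝ)
    (E : Set (EuclideanSpace ℝ (Fin N))) (x : EuclideanSpace ℝ (Fin N)) : ℝ :=
  rdistP φ x E - rdistP φ x Eᶜ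

section Basic
variable {N : ℕ} {φ : EuclideanSpace ℝ (Fin N) → ℝ} (hφ : IsAnisoNorm φ)
include hφ

lemma phi_zero : φ 0 = 0 := by
  have := hφ.homog 0 0 le_rfl
  simpa using this

lemma phi_nonneg (x : EuclideanSpace ℝ (Fin N)) : 0 ≤ φ x := by
  rcases eq_or_ne x 0 with rfl | h
  · exact (phi_zero hφ).ge
  · exact (hφ.pos x h).le

lemma phi_abs_smul (c : ℝ) (x : EuclideanSpace ℝ (Fin N)) : φ (c • x) = |c| * φ x := by
  rcases le_or_gt 0 c with h | h
  · rw [hφ.homog c x h, abs_of_nonneg h]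
  · have : c • x = -((-c) • x) := by simp
    rw [this, hφ.even, hφ.homog (-c) x (by linarith), abs_of_neg h]

lemma phi_add (x y : EuclideanSpace ℝ (Fin N)) : φ (x + y) ≤ φ x + φ y := by
  have h := hφ.convexOn.2 (Set.mem_univ x) (Set.mem_univ y)
    (by norm_num : (0:ℝ) ≤ 1/2) (by norm_num : (0:ℝ) ≤ 1/2) (by norm_num)
  have h2 : (1/2 : ℝ) • x + (1/2 : ℝ) • y = (1/2 : ℝ) • (x + y) := by
    rw [smul_add]
  rw [h2, hφ.homog (1/2) (x+y) (by norm_num)] at h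
  simp only [smul_eq_mul] at h
  linarith

lemma phi_continuous : Continuous φ := by
  have := hφ.convexOn.continuousOn isOpen_univ
  rw [← continuousOn_univ]
  exact this

lemma phi_bounds (hN : 0 < N) :
    ∃ c C : ℝ, 0 < c ∧ 0 < C ∧ ∀ x, c * ‖x‖ ≤ φ x ∧ φ x ≤ C * ‖x‖ := by
  have hsc : IsCompact (Metric.sphere (0 : EuclideanSpace ℝ (Fin N)) 1) := isCompact_sphere 0 1
  have hsne : (Metric.sphere (0 : EuclideanSpace ℝ (Fin N)) 1).Nonempty := by
    refine ⟨EuclideanSpace.single ⟨0, hN⟩ (1:ℝ), ?_⟩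
    simp [EuclideanSpace.norm_single]
  obtain ⟨a, ha, hamin⟩ := hsc.exists_isMinOn hsne (phi_continuous hφ).continuousOn
  obtain ⟨b, hb, hbmax⟩ := hsc.exists_isMaxOn hsne (phi_continuous hφ).continuousOn
  have ha0 : a ≠ 0 := by
    intro h; rw [h] at ha; simp at ha
  refine ⟨φ a, φ b + 1, hφ.pos a ha0, ?_, ?_⟩
  · have := phi_nonneg hφ b; linarith
  · intro x
    rcases eq_or_ne x 0 with rfl | hx
    · simp [phi_zero hφ]
    · have hxn : (0:ℝ) < ‖x‖ := norm_pos_iff.mpr hx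
      set u := ‖x‖⁻¹ • x with hu
      have hus : u ∈ Metric.sphere (0 : EuclideanSpace ℝ (Fin N)) 1 := by
        simp [hu, norm_smul, abs_of_nonneg (inv_nonneg.mpr hxn.le), inv_mul_cancel₀ hxn.ne']
      have hxu : x = ‖x‖ • u := by
        rw [hu, smul_smul, mul_inv_cancel₀ hxn.ne', one_smul]
      have hphix : φ x = ‖x‖ * φ u := by
        conv_lhs => rw [hxu]
        rw [hφ.homog _ _ hxn.le]
      have h2 : φ a ≤ φ u := hamin hus
      have h3 : φ u ≤ φ b := hbmax hus
      have h4 := phi_nonneg hφ u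
      constructor
      · rw [hphix]; nlinarith
      · rw [hphix]; nlinarith

lemma polar_set_nonempty (ξ : EuclideanSpace ℝ (Fin N)) :
    ((fun η => ⟪ξ, η⟫) '' {η : EuclideanSpace ℝ (Fin N) | φ η ≤ 1}).Nonempty :=
  ⟨0, ⟨0, by simp [phi_zero hφ], by simp⟩⟩

lemma polar_bddAbove (hN : 0 < N) (ξ : EuclideanSpace ℝ (Fin N)) :
    BddAbove ((fun η => ⟪ξ, η⟫) '' {η : EuclideanSpace ℝ (Fin N) | φ η ≤ 1}) := by
  obtain ⟨c, C, hc, hC, hb⟩ := phi_bounds hφ hN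
  refine ⟨‖ξ‖ * c⁻¹, ?_⟩
  rintro _ ⟨η, hη, rfl⟩
  have h1 : ‖η‖ ≤ c⁻¹ := by
    have h2 := (hb η).1
    have h3 : φ η ≤ 1 := hη
    nlinarith [inv_pos.mpr hc, mul_le_mul_of_nonneg_left (h2.trans h3) (inv_nonneg.mpr hc.le), inv_mul_cancel₀ hc.ne']
  calc ⟪ξ, η⟫ ≤ ‖ξ‖ * ‖η‖ := real_inner_le_norm ξ η
    _ ≤ ‖ξ‖ * c⁻¹ := by
      exact mul_le_mul_of_nonneg_left h1 (norm_nonneg ξ)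

lemma inner_le_polar (hN : 0 < N) {ξ η : EuclideanSpace ℝ (Fin N)} (hη : φ η ≤ 1) :
    ⟪ξ, η⟫ ≤ polar φ ξ :=
  le_csSup (polar_bddAbove hφ hN ξ) ⟨η, hη, rfl⟩

lemma polar_nonneg (hN : 0 < N) (ξ : EuclideanSpace ℝ (Fin N)) : 0 ≤ polar φ ξ := by
  have := inner_le_polar hφ hN (η := 0) (ξ := ξ) (by simp [phi_zero hφ])
  simpa using this

lemma polar_le {ξ : EuclideanSpace ℝ (Fin N)} {a : ℝ}
    (h : ∀ η, φ η ≤ 1 → ⟪ξ, η⟫ ≤ a) : polar φ ξ ≤ a := by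
  apply csSup_le (polar_set_nonempty hφ ξ)
  rintro _ ⟨η, hη, rfl⟩
  exact h η hη

lemma inner_le_polar_mul_phi (hN : 0 < N) (ξ η : EuclideanSpace ℝ (Fin N)) :
    ⟪ξ, η⟫ ≤ polar φ ξ * φ η := by
  rcases eq_or_ne η 0 with rfl | hη
  · simp [phi_zero hφ]
  · have ht : 0 < φ η := hφ.pos η hη
    have h1 : φ ((φ η)⁻¹ • η) ≤ 1 := by
      rw [hφ.homog _ _ (inv_nonneg.mpr ht.le), inv_mul_cancel₀ ht.ne']
    have h2 := inner_le_polar hφ hN (ξ := ξ) h1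
    rw [real_inner_smul_right] at h2
    calc ⟪ξ, η⟫ = φ η * ((φ η)⁻¹ * ⟪ξ, η⟫) := by field_simp
      _ ≤ φ η * polar φ ξ := mul_le_mul_of_nonneg_left h2 ht.le
      _ = polar φ ξ * φ η := mul_comm _ _

lemma polar_smul (hN : 0 < N) {t : ℝ} (ht : 0 ≤ t) (ξ : EuclideanSpace ℝ (Fin N)) :
    polar φ (t • ξ) = t * polar φ ξ := by
  rcases eq_or_lt_of_le ht with rfl | ht
  · simp only [zero_smul, zero_mul]
    apply le_antisymm
    · apply polar_le hφ; intro η _; simp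
    · exact polar_nonneg hφ hN 0
  · apply le_antisymm
    · apply polar_le hφ; intro η hη
      rw [real_inner_smul_left]
      exact mul_le_mul_of_nonneg_left (inner_le_polar hφ hN hη) ht.le
    · have : polar φ ξ ≤ t⁻¹ * polar φ (t • ξ) := by
        apply polar_le hφ; intro η hη
        have := inner_le_polar hφ hN (ξ := t • ξ) hη
        rw [real_inner_smul_left] at this
        have h4 := mul_le_mul_of_nonneg_left this (inv_nonneg.mpr ht.le)
        calc ⟪ξ, η⟫ = t⁻¹ * (t * ⟪ξ, η⟫) := by field_simp
          _ ≤ t⁻¹ * polar φ (t • ξ) := h4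
      have h5 := mul_le_mul_of_nonneg_left this ht.le
      calc t * polar φ ξ ≤ t * (t⁻¹ * polar φ (t • ξ)) := h5
        _ = polar φ (t • ξ) := by field_simp

lemma polar_neg (hN : 0 < N) (ξ : EuclideanSpace ℝ (Fin N)) :
    polar φ (-ξ) = polar φ ξ := by
  have key : ∀ ζ : EuclideanSpace ℝ (Fin N), polar φ (-ζ) ≤ polar φ ζ := by
    intro ζ
    apply polar_le hφ; intro η hη
    have hη' : φ (-η) ≤ 1 := by rw [hφ.even]; exact hη
    have h2 := inner_le_polar hφ hN (ξ := ζ) hη'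
    rw [inner_neg_right] at h2
    rw [inner_neg_left]
    exact h2
  refine le_antisymm (key ξ) ?_
  have := key (-ξ); rwa [neg_neg] at this

lemma polar_abs_smul (hN : 0 < N) (t : ℝ) (ξ : EuclideanSpace ℝ (Fin N)) :
    polar φ (t • ξ) = |t| * polar φ ξ := by
  rcases le_or_gt 0 t with h | h
  · rw [polar_smul hφ hN h, abs_of_nonneg h]
  · have : t • ξ = -((-t) • ξ) := by module
    rw [this, polar_neg hφ hN, polar_smul hφ hN (by linarith), abs_of_neg h]

lemma polar_add (hN : 0 < N) (ξ ζ : EuclideanSpace ℝ (Fin N)) :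
    polar φ (ξ + ζ) ≤ polar φ ξ + polar φ ζ := by
  apply polar_le hφ; intro η hη
  rw [inner_add_left]
  exact add_le_add (inner_le_polar hφ hN hη) (inner_le_polar hφ hN hη)

lemma polar_triangle (hN : 0 < N) (x y z : EuclideanSpace ℝ (Fin N)) :
    polar φ (x - y) ≤ polar φ (x - z) + polar φ (z - y) := by
  have : x - y = (x - z) + (z - y) := by abel
  rw [this]; exact polar_add hφ hN _ _

lemma polar_zero (hN : 0 < N) : polar φ (0 : EuclideanSpace ℝ (Fin N)) = 0 := by
  apply le_antisymm
  · apply polar_le hφ; intro η _; simp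
  · exact polar_nonneg hφ hN 0

lemma norm_le_mul_polar (hN : 0 < N) {C : ℝ} (hC : 0 < C)
    (h : ∀ x, φ x ≤ C * ‖x‖) (ξ : EuclideanSpace ℝ (Fin N)) :
    ‖ξ‖ ≤ C * polar φ ξ := by
  rcases eq_or_ne ξ 0 with rfl | hξ
  · simp [polar_zero hφ hN]
  · have hn : 0 < ‖ξ‖ := norm_pos_iff.mpr hξ
    set η := (C * ‖ξ‖)⁻¹ • ξ with hη
    have hmem : φ η ≤ 1 := by
      rw [hη, hφ.homog _ _ (inv_nonneg.mpr (by positivity))]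
      have := h ξ
      rw [inv_mul_le_iff₀ (by positivity)]
      simpa using this
    have h2 := inner_le_polar hφ hN (ξ := ξ) hmem
    rw [hη, real_inner_smul_right, real_inner_self_eq_norm_sq] at h2
    have h3 : (C * ‖ξ‖)⁻¹ * ‖ξ‖^2 = ‖ξ‖ / C := by field_simp
    rw [h3] at h2
    rw [div_le_iff₀ hC] at h2 <;> nlinarith

lemma polar_le_norm_div {c : ℝ} (hc : 0 < c)
    (h : ∀ x, c * ‖x‖ ≤ φ x) (ξ : EuclideanSpace ℝ (Fin N)) :
    polar φ ξ ≤ c⁻¹ * ‖ξ‖ := by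
  apply polar_le hφ; intro η hη
  have h1 : ‖η‖ ≤ c⁻¹ := by
    nlinarith [h η, inv_pos.mpr hc, inv_mul_cancel₀ hc.ne',
      mul_le_mul_of_nonneg_left ((h η).trans hη) (inv_nonneg.mpr hc.le)]
  calc ⟪ξ, η⟫ ≤ ‖ξ‖ * ‖η‖ := real_inner_le_norm ξ η
    _ ≤ ‖ξ‖ * c⁻¹ := mul_le_mul_of_nonneg_left h1 (norm_nonneg ξ)
    _ = c⁻¹ * ‖ξ‖ := mul_comm _ _

lemma phi_le_one_of_polar (hN : 0 < N) {v : EuclideanSpace ℝ (Fin N)}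
    (H : ∀ u, polar φ u ≤ 1 → ⟪v, u⟫ ≤ 1) : φ v ≤ 1 := by
  by_contra hv
  push_neg at hv
  set K : Set (EuclideanSpace ℝ (Fin N)) := {η | φ η ≤ 1} with hK
  have hKconv : Convex ℝ K := by
    have := hφ.convexOn.convex_le 1
    simpa [hK] using this
  have hKcl : IsClosed K := isClosed_Iic.preimage (phi_continuous hφ)
  have hvK : v ∉ K := by simp [hK]; linarith
  obtain ⟨f, s, hfs, hsv⟩ := geometric_hahn_banach_closed_point hKconv hKcl hvK
  have h0K : (0 : EuclideanSpace ℝ (Fin N)) ∈ K := by simp [hK, phi_zero hφ]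
  have hs0 : 0 < s := by have := hfs 0 h0K; simpa using this
  set w := (InnerProductSpace.toDual ℝ (EuclideanSpace ℝ (Fin N))).symm f with hw
  have hwf : ∀ z, ⟪w, z⟫ = f z := fun z => InnerProductSpace.toDual_symm_apply
  set u := s⁻¹ • w with hu
  have hupolar : polar φ u ≤ 1 := by
    apply polar_le hφ; intro η hη
    rw [hu, real_inner_smul_left, hwf]
    have := hfs η hη
    rw [inv_mul_le_iff₀ hs0]; linarith
  have := H u hupolar
  rw [hu, real_inner_comm, real_inner_smul_left, hwf] at this
  rw [inv_mul_le_iff₀ hs0] at this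
  linarith

lemma one_le_phi_of_polar (hN : 0 < N) {v : EuclideanSpace ℝ (Fin N)}
    (H : ∀ ε : ℝ, 0 < ε → ∃ u, polar φ u ≤ 1 ∧ 1 - ε ≤ ⟪v, u⟫) : 1 ≤ φ v := by
  by_contra hv
  push_neg at hv
  obtain ⟨u, hu1, hu2⟩ := H ((1 - φ v)/2) (by linarith)
  have h1 : ⟪v, u⟫ ≤ polar φ u * φ v := by
    rw [real_inner_comm]
    exact inner_le_polar_mul_phi hφ hN u v
  have h2 : polar φ u * φ v ≤ φ v :=
    mul_le_of_le_one_left (phi_nonneg hφ v) hu1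
  linarith

end Basic

section Rdist
variable {N : ℕ} {φ : EuclideanSpace ℝ (Fin N) → ℝ} (hφ : IsAnisoNorm φ) (hN : 0 < N)
include hφ hN

lemma rdist_nonneg (x : EuclideanSpace ℝ (Fin N)) (F : Set (EuclideanSpace ℝ (Fin N))) :
    0 ≤ rdistP φ x F := by
  apply Real.sInf_nonneg
  rintro _ ⟨y, hy, rfl⟩
  exact polar_nonneg hφ hN _

lemma rdist_le {x y : EuclideanSpace ℝ (Fin N)} {F : Set (EuclideanSpace ℝ (Fin N))}
    (hy : y ∈ F) : rdistP φ x F ≤ polar φ (x - y) := by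
  refine csInf_le ⟨0, ?_⟩ ⟨y, hy, rfl⟩
  rintro _ ⟨z, hz, rfl⟩
  exact polar_nonneg hφ hN _

lemma le_rdist {x : EuclideanSpace ℝ (Fin N)} {F : Set (EuclideanSpace ℝ (Fin N))}
    (hF : F.Nonempty) {a : ℝ} (h : ∀ y ∈ F, a ≤ polar φ (x - y)) : a ≤ rdistP φ x F := by
  apply le_csInf (hF.image _)
  rintro _ ⟨y, hy, rfl⟩
  exact h y hy

lemma rdist_tri {F : Set (EuclideanSpace ℝ (Fin N))} (hF : F.Nonempty)
    (x z : EuclideanSpace ℝ (Fin N)) :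
    rdistP φ x F ≤ rdistP φ z F + polar φ (x - z) := by
  have h : rdistP φ x F - polar φ (x - z) ≤ rdistP φ z F := by
    apply le_rdist hφ hN hF
    intro y hy
    have h1 : rdistP φ x F ≤ polar φ (x - y) := rdist_le hφ hN hy
    have h2 := polar_triangle hφ hN x y z
    linarith
  linarith

lemma rdist_zero_of_mem {x : EuclideanSpace ℝ (Fin N)} {F : Set (EuclideanSpace ℝ (Fin N))}
    (hx : x ∈ F) : rdistP φ x F = 0 := by
  refine le_antisymm ?_ (rdist_nonneg hφ hN x F)
  have := rdist_le hφ hN (x := x) hx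
  rwa [sub_self, polar_zero hφ hN] at this

lemma rdist_pos {x : EuclideanSpace ℝ (Fin N)} {F : Set (EuclideanSpace ℝ (Fin N))}
    (hF : F.Nonempty) {r C : ℝ} (hr : 0 < r) (hC : 0 < C)
    (hub : ∀ z, φ z ≤ C * ‖z‖) (h : ∀ y ∈ F, r ≤ ‖x - y‖) :
    0 < rdistP φ x F := by
  have : r / C ≤ rdistP φ x F := by
    apply le_rdist hφ hN hF
    intro y hy
    have h1 := norm_le_mul_polar hφ hN hC hub (x - y)
    have h2 := h y hy
    rw [div_le_iff₀ hC]
    nlinarith [polar_nonneg hφ hN (x - y)]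
  have : 0 < r / C := by positivity
  linarith

end Rdist

section SD
variable {N : ℕ} {φ : EuclideanSpace ℝ (Fin N) → ℝ} (hφ : IsAnisoNorm φ) (hN : 0 < N)
  {E : Set (EuclideanSpace ℝ (Fin N))} (hE : IsClosed E) (hne : E.Nonempty)
  (hne' : Eᶜ.Nonempty)
include hφ hN

lemma sd_mixed (hE : IsClosed E) (hne : E.Nonempty) (hne' : Eᶜ.Nonempty)
    {x y : EuclideanSpace ℝ (Fin N)} (hx : x ∈ E) (hy : y ∈ Eᶜ) :
    rdistP φ x Eᶜ + rdistP φ y E ≤ polar φ (x - y) := by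
  set γ : ℝ → EuclideanSpace ℝ (Fin N) := fun t => x + t • (y - x) with hγ
  have hγc : Continuous γ := by continuity
  set T : Set ℝ := {t | γ t ∈ E} ∩ Set.Icc 0 1 with hT
  have hTc : IsCompact T :=
    isCompact_Icc.of_isClosed_subset ((hE.preimage hγc).inter isClosed_Icc)
      Set.inter_subset_right
  have h0T : (0 : ℝ) ∈ T := by
    constructor
    · simp [hγ, hx]
    · exact ⟨le_rfl, zero_le_one⟩
  set t₀ := sSup T with ht₀def
  have ht₀ : t₀ ∈ T := hTc.sSup_mem ⟨0, h0T⟩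
  have hγ1 : γ 1 = y := by simp [hγ]
  have ht₀1 : t₀ < 1 := by
    rcases lt_or_eq_of_le ht₀.2.2 with h | h
    · exact h
    · exfalso
      have h2 : γ t₀ ∈ E := ht₀.1
      rw [h, hγ1] at h2
      exact hy h2
  have hcompl : ∀ t, t₀ < t → t ≤ 1 → γ t ∈ Eᶜ := by
    intro t h1 h2
    by_contra hmem
    rw [Set.notMem_compl_iff] at hmem
    have : t ∈ T := ⟨hmem, ⟨by linarith [ht₀.2.1], h2⟩⟩
    have := le_csSup hTc.bddAbove this
    linarith
  set P := polar φ (x - y) with hP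
  have hP0 : 0 ≤ P := polar_nonneg hφ hN _
  have key : ∀ ε : ℝ, 0 < ε → rdistP φ x Eᶜ + rdistP φ y E ≤ P + ε := by
    intro ε hε
    have htP : 0 < ε / (P+1) := by positivity
    obtain ⟨t, ht1, ht2, ht3⟩ : ∃ t, t ≤ 1 ∧ t₀ < t ∧ t ≤ t₀ + ε / (P + 1) :=
      ⟨min 1 (t₀ + ε / (P + 1)), min_le_left _ _, lt_min ht₀1 (by linarith),
        min_le_right _ _⟩
    have htmem : γ t ∈ Eᶜ := hcompl t ht2 ht1
    have ht0 : 0 ≤ t := le_trans ht₀.2.1 ht2.le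
    have e1 : x - γ t = t • (x - y) := by
      show x - (x + t • (y - x)) = t • (x - y); module
    have e2 : y - γ t₀ = (1 - t₀) • (y - x) := by
      show y - (x + t₀ • (y - x)) = (1 - t₀) • (y - x); module
    have b1 : rdistP φ x Eᶜ ≤ t * P := by
      have := rdist_le hφ hN (x := x) htmem
      rwa [e1, polar_smul hφ hN ht0] at this
    have b2 : rdistP φ y E ≤ (1 - t₀) * P := by
      have h6 := rdist_le hφ hN (x := y) ht₀.1
      rw [e2, polar_smul hφ hN (by linarith)] at h6
      rwa [show y - x = -(x - y) by abel, polar_neg hφ hN] at h6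
    have : t * P ≤ t₀ * P + ε := by
      have : (ε / (P + 1)) * P ≤ ε := by
        rw [div_mul_eq_mul_div, div_le_iff₀ (by linarith)]
        nlinarith
      nlinarith
    nlinarith [ht₀.2.1]
  by_contra hcon
  push_neg at hcon
  have := key ((rdistP φ x Eᶜ + rdistP φ y E - P)/2) (by linarith)
  linarith

lemma sd_lip (hE : IsClosed E) (hne : E.Nonempty) (hne' : Eᶜ.Nonempty)
    (x y : EuclideanSpace ℝ (Fin N)) :
    |signedDistP φ E x - signedDistP φ E y| ≤ polar φ (x - y) := by
  have hsym : polar φ (y - x) = polar φ (x - y) := by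
    rw [show y - x = -(x - y) by abel, polar_neg hφ hN]
  by_cases hx : x ∈ E <;> by_cases hy : y ∈ E
  · rw [signedDistP, signedDistP, rdist_zero_of_mem hφ hN hx, rdist_zero_of_mem hφ hN hy]
    simp only [zero_sub]
    rw [abs_le]
    have h1 := rdist_tri hφ hN (F := Eᶜ) hne' x y
    have h2 := rdist_tri hφ hN (F := Eᶜ) hne' y x
    rw [hsym] at h2
    constructor <;> linarith
  · have hy' : y ∈ Eᶜ := hy
    rw [signedDistP, signedDistP, rdist_zero_of_mem hφ hN hx,
      rdist_zero_of_mem hφ hN (Set.mem_compl hy)]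
    have h1 := sd_mixed hφ hN hE hne hne' hx hy'
    have h2 := rdist_nonneg hφ hN x Eᶜ
    have h3 := rdist_nonneg hφ hN y E
    rw [abs_le]; constructor <;> [linarith; linarith]
  · have hx' : x ∈ Eᶜ := hx
    rw [signedDistP, signedDistP, rdist_zero_of_mem hφ hN hy,
      rdist_zero_of_mem hφ hN (Set.mem_compl hx)]
    have h1 := sd_mixed hφ hN hE hne hne' hy hx'
    have h2 := rdist_nonneg hφ hN y Eᶜ
    have h3 := rdist_nonneg hφ hN x E
    rw [abs_le]; constructor <;> [linarith; linarith]
  · rw [signedDistP, signedDistP, rdist_zero_of_mem hφ hN (Set.mem_compl hx),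
      rdist_zero_of_mem hφ hN (Set.mem_compl hy)]
    simp only [sub_zero]
    rw [abs_le]
    have h1 := rdist_tri hφ hN (F := E) hne x y
    have h2 := rdist_tri hφ hN (F := E) hne y x
    rw [hsym] at h2
    constructor <;> linarith

end SD

section Eik
variable {N : ℕ} {φ : EuclideanSpace ℝ (Fin N) → ℝ} (hφ : IsAnisoNorm φ) (hN : 0 < N)
include hφ hN

lemma eikonal_aux {F : Set (EuclideanSpace ℝ (Fin N))} (hF : F.Nonempty)
    {f : EuclideanSpace ℝ (Fin N) → ℝ} {x : EuclideanSpace ℝ (Fin N)}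
    {f' : EuclideanSpace ℝ (Fin N) →L[ℝ] ℝ} (hd : HasFDerivAt f f' x)
    (h1 : ∀ z, f z ≤ rdistP φ z F) (h2 : f x = rdistP φ x F)
    (hρ : 0 < rdistP φ x F) :
    ∀ ε : ℝ, 0 < ε → ∃ u, polar φ u ≤ 1 ∧ f' u ≤ -(1 - ε) := by
  intro ε hε
  obtain ⟨c, C, hc, hC, hb⟩ := phi_bounds hφ hN
  set ρ := rdistP φ x F with hρdef
  -- little-o estimate
  have hlo := hasFDerivAt_iff_isLittleO_nhds_zero.mp hd
  rw [Asymptotics.isLittleO_iff] at hlo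
  have hev := hlo (show (0:ℝ) < ε / (2 * C) by positivity)
  rw [Metric.eventually_nhds_iff] at hev
  obtain ⟨δ, hδ, hδev⟩ := hev
  -- choose t
  obtain ⟨t, ht0, htδ, htρ, htε⟩ :
      ∃ t : ℝ, 0 < t ∧ t ≤ δ / (2 * C) ∧ t ≤ ρ / 2 ∧ t ≤ ε / 2 := by
    refine ⟨min (min (δ / (2*C)) (ρ/2)) (ε/2), ?_, ?_, ?_, ?_⟩
    · apply lt_min (lt_min (by positivity) (by positivity)) (by positivity)
    · exact le_trans (min_le_left _ _) (min_le_left _ _)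
    · exact le_trans (min_le_left _ _) (min_le_right _ _)
    · exact min_le_right _ _
  -- near minimizer
  have hlt : sInf ((fun y => polar φ (x - y)) '' F) < ρ + t * t := by
    rw [← rdistP]; nlinarith
  obtain ⟨b, hbmem, hblt⟩ := exists_lt_of_csInf_lt (hF.image _) hlt
  obtain ⟨y, hyF, rfl⟩ := hbmem
  set R := polar φ (x - y) with hR
  have hρR : ρ ≤ R := rdist_le hφ hN hyF
  have hR0 : 0 < R := lt_of_lt_of_le hρ hρR
  have htR : t < R := by nlinarith
  set w := R⁻¹ • (y - x) with hw
  have hw1 : polar φ w = 1 := by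
    rw [hw, polar_smul hφ hN (inv_nonneg.mpr hR0.le),
      show y - x = -(x - y) by abel, polar_neg hφ hN, ← hR, inv_mul_cancel₀ hR0.ne']
  have hwn : ‖w‖ ≤ C := by
    have := norm_le_mul_polar hφ hN hC (fun z => (hb z).2) w
    rwa [hw1, mul_one] at this
  -- the increment
  have hhn : ‖t • w‖ < δ := by
    rw [norm_smul, Real.norm_eq_abs, abs_of_pos ht0]
    calc t * ‖w‖ ≤ t * C := mul_le_mul_of_nonneg_left hwn ht0.le
      _ ≤ (δ / (2*C)) * C := mul_le_mul_of_nonneg_right htδ hC.le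
      _ = δ / 2 := by field_simp
      _ < δ := by linarith
  have hlob := hδev (y := t • w) (by rwa [dist_zero_right])
  rw [Real.norm_eq_abs] at hlob
  have hbound : |f (x + t • w) - f x - f' (t • w)| ≤ ε * t / 2 := by
    refine hlob.trans ?_
    rw [norm_smul, Real.norm_eq_abs, abs_of_pos ht0]
    calc ε / (2*C) * (t * ‖w‖) ≤ ε / (2*C) * (t * C) := by
          apply mul_le_mul_of_nonneg_left (mul_le_mul_of_nonneg_left hwn ht0.le)
          positivity
      _ = ε * t / 2 := by field_simp
  -- upper bound on f (x + t w)
  have hvec : x + t • w - y = (1 - t * R⁻¹) • (x - y) := by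
    rw [hw]; show x + t • (R⁻¹ • (y - x)) - y = (1 - t * R⁻¹) • (x - y)
    rw [smul_smul]; module
  have hs0 : 0 ≤ 1 - t * R⁻¹ := by
    rw [sub_nonneg, ← div_eq_mul_inv, div_le_one hR0]; exact htR.le
  have hup : f (x + t • w) ≤ R - t := by
    have ha := h1 (x + t • w)
    have hb2 : rdistP φ (x + t • w) F ≤ polar φ (x + t • w - y) := rdist_le hφ hN hyF
    rw [hvec, polar_smul hφ hN hs0, ← hR] at hb2
    have : (1 - t * R⁻¹) * R = R - t := by field_simp
    rw [this] at hb2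
    linarith
  -- conclude
  have hflow : f' (t • w) ≤ f (x + t • w) - f x + ε * t / 2 := by
    have := abs_le.mp hbound
    linarith [this.1, this.2]
  have hfx : f x = ρ := h2
  have hΔ : f (x + t • w) - f x ≤ t * t - t := by
    have : R < ρ + t * t := hblt
    rw [hfx]; linarith
  have hfw : t * f' w ≤ t * t - t + ε * t / 2 := by
    have : f' (t • w) = t * f' w := by
      rw [f'.map_smul]; simp
    linarith [this ▸ hflow]
  have hfw2 : f' w ≤ t - 1 + ε / 2 := by
    have h8 := mul_le_mul_of_nonneg_left hfw (inv_nonneg.mpr ht0.le)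
    have h9 : t⁻¹ * (t * f' w) = f' w := by field_simp
    have h10 : t⁻¹ * (t * t - t + ε * t / 2) = t - 1 + ε / 2 := by field_simp
    rw [h9, h10] at h8
    exact h8
  refine ⟨w, hw1.le, ?_⟩
  have : t ≤ ε / 2 := htε
  linarith

lemma fderiv_le_polar {f : EuclideanSpace ℝ (Fin N) → ℝ} {x : EuclideanSpace ℝ (Fin N)}
    {f' : EuclideanSpace ℝ (Fin N) →L[ℝ] ℝ} (hd : HasFDerivAt f f' x)
    (hlip : ∀ z w, |f z - f w| ≤ polar φ (z - w))
    (u : EuclideanSpace ℝ (Fin N)) : f' u ≤ polar φ u := by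
  set ψ : ℝ → ℝ := fun t => f (x + t • u) with hψ
  have hline : HasDerivAt (fun t : ℝ => x + t • u) u 0 := by
    have h1 : HasDerivAt (fun t : ℝ => t • u) u 0 := by
      simpa using (hasDerivAt_id (0:ℝ)).smul_const u
    simpa using h1.const_add x
  have hψd : HasDerivAt ψ (f' u) 0 := by
    have hd' : HasFDerivAt f f' (x + (0:ℝ) • u) := by simpa using hd
    exact hd'.comp_hasDerivAt 0 hline
  have hslope : Tendsto (slope ψ 0) (𝓝[≠] 0) (𝓝 (f' u)) :=
    hasDerivAt_iff_tendsto_slope.mp hψd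
  have hbound : ∀ t : ℝ, t ≠ 0 → slope ψ 0 t ≤ polar φ u := by
    intro t ht
    have h1 : |ψ t - ψ 0| ≤ |t| * polar φ u := by
      have := hlip (x + t • u) (x + (0:ℝ) • u)
      have he : x + t • u - (x + (0:ℝ) • u) = t • u := by module
      rw [he, polar_abs_smul hφ hN] at this
      simp only [hψ]
      exact this
    have h2 : |slope ψ 0 t| ≤ polar φ u := by
      rw [slope_def_field, sub_zero, abs_div]
      rw [div_le_iff₀ (abs_pos.mpr ht)]
      calc |ψ t - ψ 0| ≤ |t| * polar φ u := h1
        _ = polar φ u * |t| := mul_comm _ _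
    calc slope ψ 0 t ≤ |slope ψ 0 t| := le_abs_self _
      _ ≤ polar φ u := h2
  refine le_of_tendsto hslope ?_
  filter_upwards [self_mem_nhdsWithin] with t ht
  exact hbound t ht

end Eik

theorem statement9 {N : ℕ} (hN : 0 < N) (φ : EuclideanSpace ℝ (Fin N) → ℝ)
    (hφ : IsAnisoNorm φ) (E : Set (EuclideanSpace ℝ (Fin N))) (hE : IsClosed E)
    (hne : E.Nonempty) (hne' : Eᶜ.Nonempty) :
    (∀ x y, |signedDistP φ E x - signedDistP φ E y| ≤ polar φ (x - y)) ∧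
    (∀ x ∉ frontier E, DifferentiableAt ℝ (signedDistP φ E) x →
      φ (gradient (signedDistP φ E) x) = 1) ∧
    (∀ᵐ x ∂(MeasureTheory.volume.restrict (frontier E)ᶜ),
      DifferentiableAt ℝ (signedDistP φ E) x ∧ φ (gradient (signedDistP φ E) x) = 1) := by
  obtain ⟨c, C, hc, hC, hb⟩ := phi_bounds hφ hN
  have part1 : ∀ x y, |signedDistP φ E x - signedDistP φ E y| ≤ polar φ (x - y) :=
    sd_lip hφ hN hE hne hne'
  have part2 : ∀ x ∉ frontier E, DifferentiableAt ℝ (signedDistP φ E) x →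
      φ (gradient (signedDistP φ E) x) = 1 := by
    intro x hx hdiff
    have hfd : HasFDerivAt (signedDistP φ E) (fderiv ℝ (signedDistP φ E) x) x :=
      hdiff.hasFDerivAt
    have hgu : ∀ u, ⟪gradient (signedDistP φ E) x, u⟫ = fderiv ℝ (signedDistP φ E) x u :=
      fun u => InnerProductSpace.toDual_symm_apply
    have hupper : φ (gradient (signedDistP φ E) x) ≤ 1 := by
      apply phi_le_one_of_polar hφ hN
      intro u hu
      have h1 := fderiv_le_polar hφ hN hfd (fun z w => part1 z w) u
      rw [← hgu u] at h1
      linarith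
    have hlower : 1 ≤ φ (gradient (signedDistP φ E) x) := by
      apply one_le_phi_of_polar hφ hN
      intro ε hε
      by_cases hxE : x ∈ E
      · -- x ∈ interior E; work with -sd and Eᶜ
        have hxint : x ∈ interior E := by
          by_contra hint
          exact hx ⟨subset_closure hxE, hint⟩
        obtain ⟨r, hr, hball⟩ := Metric.isOpen_iff.mp isOpen_interior x hxint
        have hρ : 0 < rdistP φ x Eᶜ := by
          apply rdist_pos hφ hN hne' hr hC (fun z => (hb z).2)
          intro y hy
          have hnb : y ∉ Metric.ball x r := fun h => hy (interior_subset (hball h))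
          rw [Metric.mem_ball, dist_comm] at hnb
          push_neg at hnb
          rwa [← dist_eq_norm]
        have hd2 : HasFDerivAt (fun z => -(signedDistP φ E z))
            (-(fderiv ℝ (signedDistP φ E) x)) x := hfd.neg
        have h1 : ∀ z, -(signedDistP φ E z) ≤ rdistP φ z Eᶜ := by
          intro z
          have := rdist_nonneg hφ hN z E
          simp only [signedDistP]
          linarith
        have h2 : -(signedDistP φ E x) = rdistP φ x Eᶜ := by
          simp only [signedDistP, rdist_zero_of_mem hφ hN hxE]
          ring
        obtain ⟨u, hu1, hu2⟩ := eikonal_aux hφ hN hne' hd2 h1 h2 hρ ε hε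
        refine ⟨u, hu1, ?_⟩
        have h3 : (-(fderiv ℝ (signedDistP φ E) x)) u = -(fderiv ℝ (signedDistP φ E) x u) := by
          simp
        rw [h3] at hu2
        rw [hgu u]
        linarith
      · -- x ∉ E
        have hxc : x ∈ Eᶜ := hxE
        obtain ⟨r, hr, hball⟩ := Metric.isOpen_iff.mp hE.isOpen_compl x hxc
        have hρ : 0 < rdistP φ x E := by
          apply rdist_pos hφ hN hne hr hC (fun z => (hb z).2)
          intro y hy
          have hnb : y ∉ Metric.ball x r := fun h => (hball h) hy
          rw [Metric.mem_ball, dist_comm] at hnb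
          push_neg at hnb
          rwa [← dist_eq_norm]
        have h1 : ∀ z, signedDistP φ E z ≤ rdistP φ z E := by
          intro z
          have := rdist_nonneg hφ hN z Eᶜ
          simp only [signedDistP]
          linarith
        have h2 : signedDistP φ E x = rdistP φ x E := by
          simp only [signedDistP, rdist_zero_of_mem hφ hN hxc]
          ring
        obtain ⟨u, hu1, hu2⟩ := eikonal_aux hφ hN hne hfd h1 h2 hρ ε hε
        refine ⟨-u, ?_, ?_⟩
        · rw [polar_neg hφ hN]; exact hu1
        · rw [inner_neg_right, hgu u]
          linarith
    linarith
  refine ⟨part1, part2, ?_⟩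
  have hlipW : LipschitzWith (Real.toNNReal c⁻¹) (signedDistP φ E) := by
    apply LipschitzWith.of_dist_le_mul
    intro x y
    rw [Real.dist_eq]
    have h1 := part1 x y
    have h2 := polar_le_norm_div hφ hc (fun z => (hb z).1) (x - y)
    rw [dist_eq_norm, Real.coe_toNNReal _ (inv_nonneg.mpr hc.le)]
    linarith
  have had : ∀ᵐ z ∂(volume : Measure (EuclideanSpace ℝ (Fin N))),
      DifferentiableAt ℝ (signedDistP φ E) z := hlipW.ae_differentiableAt
  have hmeas : MeasurableSet (frontier E)ᶜ := isClosed_frontier.measurableSet.compl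
  filter_upwards [ae_restrict_of_ae had, ae_restrict_mem hmeas] with z hz1 hz2
  exact ⟨hz1, part2 z hz2 hz1⟩
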